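/- Let z₁ and z₂ be nonzero elements of the degree-2 part of F with z₁·z₂ = 0 in F. Then there exist λ₁, λ₂ ∈ ℂ* such that either z₁ = λ₁·x₊ and z₂ = λ₂·x₋, or z₁ = λ₁·x₋ and z₂ = λ₂·x₊, where x₊ = x₁ + ½(1 + √−3)·x₂ and x₋ = x₁ + ½(1 − √−3)·x₂. -/

import Mathlib

noncomputable section

open MvPolynomial

/-- The relations ideal for the cohomology of the flag manifold `SU(3)/T`. -/
def Frel : Ideal (MvPolynomial (Fin 2) ℂ) :=
  Ideal.span {X 0 ^ 2 + X 1 ^ 2 + X 0 * X 1, X 0 ^ 2 * X 1 + X 0 * X 1 ^ 2}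

/-- `F = ℂ[x₁,x₂]/(x₁²+x₂²+x₁x₂, x₁²x₂+x₁x₂²)`. -/
abbrev F := MvPolynomial (Fin 2) ℂ ⧸ Frel

def x₁ : F := Ideal.Quotient.mk Frel (X 0)
def x₂ : F := Ideal.Quotient.mk Frel (X 1)

/-- The degree-2 part of `F`. -/
def deg2F : Submodule ℂ F := Submodule.span ℂ {x₁, x₂}

/-- The relations ideal for `H_u = F[y]/(y² + u·y)`. -/
def Hrel (u : F) : Ideal (Polynomial F) :=
  Ideal.span {Polynomial.X ^ 2 + Polynomial.C u * Polynomial.X}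

instance (u : F) : (Hrel u).IsTwoSided :=
  @Ideal.instIsTwoSided_1 _ (@Polynomial.commRing F (Ideal.Quotient.commRing Frel)) (Hrel u)

/-- `H_u = F[y]/(y² + u·y)`. -/
abbrev H (u : F) := Polynomial F ⧸ Hrel u

/-- The class `y` in `H_u`. -/
def yH (u : F) : H u := Ideal.Quotient.mk (Hrel u) Polynomial.X

/-- The canonical map `F → H_u`, as a `ℂ`-algebra homomorphism. -/
def ιH (u : F) : F →ₐ[ℂ] H u :=
  (Ideal.Quotient.mkₐ ℂ (Hrel u)).comp (IsScalarTower.toAlgHom ℂ F (Polynomial F))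

/-- The degree-2 part of `H_u`. -/
def deg2H (u : F) : Submodule ℂ (H u) :=
  Submodule.span ℂ {ιH u x₁, ιH u x₂, yH u}

/-- `ω` acts on degree 2 by the matrix `(a₁₁ a₁₂; a₂₁ a₂₂)`. -/
def actsAs (ω : F ≃ₐ[ℂ] F) (a₁₁ a₁₂ a₂₁ a₂₂ : ℂ) : Prop :=
  ω x₁ = a₁₁ • x₁ + a₂₁ • x₂ ∧ ω x₂ = a₁₂ • x₁ + a₂₂ • x₂

/-- Membership in the Weyl group `W` (the six listed automorphisms). -/
def InW (ω : F ≃ₐ[ℂ] F) : Prop :=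
  actsAs ω 1 0 0 1 ∨ actsAs ω 0 1 1 0 ∨ actsAs ω (-1) 0 (-1) 1 ∨
    actsAs ω 1 (-1) 0 (-1) ∨ actsAs ω 0 (-1) 1 (-1) ∨ actsAs ω (-1) 1 (-1) 0


section Aux

lemma XmulX : (X 0 * X 1 : MvPolynomial (Fin 2) ℂ)
    = monomial (Finsupp.single 0 1 + Finsupp.single 1 1) 1 := by
  rw [monomial_add_single, ← X_pow_eq_monomial]; ring

lemma X2X : (X 0 ^ 2 * X 1 : MvPolynomial (Fin 2) ℂ)
    = monomial (Finsupp.single 0 2 + Finsupp.single 1 1) 1 := by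
  rw [monomial_add_single, ← X_pow_eq_monomial]; ring

lemma XX2 : (X 0 * X 1 ^ 2 : MvPolynomial (Fin 2) ℂ)
    = monomial (Finsupp.single 1 2 + Finsupp.single 0 1) 1 := by
  rw [monomial_add_single, ← X_pow_eq_monomial]; ring

lemma key {p : MvPolynomial (Fin 2) ℂ} (hp : p ∈ Frel) :
    coeff (Finsupp.single 0 1) p = 0 ∧ coeff (Finsupp.single 1 1) p = 0 ∧
    coeff (Finsupp.single 0 2) p = coeff (Finsupp.single 0 1 + Finsupp.single 1 1) p ∧
    coeff (Finsupp.single 1 2) p = coeff (Finsupp.single 0 1 + Finsupp.single 1 1) p := by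
  rw [Frel] at hp
  rw [X2X, XX2, XmulX, X_pow_eq_monomial, X_pow_eq_monomial, Ideal.mem_span_pair] at hp
  obtain ⟨a, b, rfl⟩ := hp
  refine ⟨?_, ?_, ?_, ?_⟩ <;>
  simp [mul_add, coeff_mul_monomial',
    Finsupp.le_def, Finsupp.single_apply, Finsupp.add_apply, Fin.forall_fin_two]

lemma smul_mk (a : ℂ) (p : MvPolynomial (Fin 2) ℂ) :
    a • Ideal.Quotient.mk Frel p = Ideal.Quotient.mk Frel (C a * p) := by
  rw [← Ideal.Quotient.mkₐ_eq_mk ℂ, ← map_smul, smul_eq_C_mul]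

lemma lin_eq (a b : ℂ) :
    a • x₁ + b • x₂ = Ideal.Quotient.mk Frel (C a * X 0 + C b * X 1) := by
  rw [x₁, x₂, smul_mk, smul_mk, map_add]

lemma lin_ne {a b : ℂ}
    (h : Ideal.Quotient.mk Frel (C a * X 0 + C b * X 1) = 0) : a = 0 ∧ b = 0 := by
  rw [Ideal.Quotient.eq_zero_iff_mem] at h
  obtain ⟨k1, k2, -, -⟩ := key h
  constructor
  · simpa [coeff_X', Finsupp.single_eq_single_iff] using k1
  · simpa [coeff_X', Finsupp.single_eq_single_iff] using k2

lemma prod_rel {a₁ b₁ a₂ b₂ : ℂ}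
    (h : ((C a₁ * X 0 + C b₁ * X 1) * (C a₂ * X 0 + C b₂ * X 1) :
      MvPolynomial (Fin 2) ℂ) ∈ Frel) :
    a₁ * a₂ = a₁ * b₂ + a₂ * b₁ ∧ b₁ * b₂ = a₁ * b₂ + a₂ * b₁ := by
  have e : ((C a₁ * X 0 + C b₁ * X 1) * (C a₂ * X 0 + C b₂ * X 1) :
      MvPolynomial (Fin 2) ℂ)
      = C (a₁*a₂) * X 0 ^ 2 + C (a₁*b₂+a₂*b₁) * (X 0 * X 1) + C (b₁*b₂) * X 1 ^ 2 := by
    push_cast [C_mul, C_add]; ring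
  rw [e] at h
  obtain ⟨-, -, k3, k4⟩ := key h
  constructor
  · simpa [X_pow_eq_monomial, XmulX, add_mul, mul_assoc, coeff_C_mul, coeff_monomial,
      Finsupp.ext_iff, Finsupp.single_apply, Finsupp.add_apply, Fin.forall_fin_two] using k3
  · simpa [X_pow_eq_monomial, XmulX, add_mul, mul_assoc, coeff_C_mul, coeff_monomial,
      Finsupp.ext_iff, Finsupp.single_apply, Finsupp.add_apply, Fin.forall_fin_two] using k4

end Aux

/-- If `z₁, z₂` are nonzero elements of the degree-2 part of `F` with
`z₁·z₂ = 0`, then (up to swapping the roles of `x₊` and `x₋`) `z₁ = λ₁·x₊` and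
`z₂ = λ₂·x₋` for some `λ₁, λ₂ ∈ ℂ*`, where `x₊ = x₁ + ½(1+√−3)·x₂` and
`x₋ = x₁ + ½(1−√−3)·x₂` and `√−3` is a fixed square root of `−3`. -/
theorem stmt7 (s : ℂ) (hs : s ^ 2 = -3) (z₁ z₂ : F)
    (hz₁ : z₁ ∈ deg2F) (hz₂ : z₂ ∈ deg2F) (hz₁0 : z₁ ≠ 0) (hz₂0 : z₂ ≠ 0)
    (hmul : z₁ * z₂ = 0) :
    ∃ lam₁ lam₂ : ℂ, lam₁ ≠ 0 ∧ lam₂ ≠ 0 ∧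
      ((z₁ = lam₁ • (x₁ + ((1 + s) / 2) • x₂) ∧ z₂ = lam₂ • (x₁ + ((1 - s) / 2) • x₂)) ∨
       (z₁ = lam₁ • (x₁ + ((1 - s) / 2) • x₂) ∧ z₂ = lam₂ • (x₁ + ((1 + s) / 2) • x₂))) := by
  have hs0 : s ≠ 0 := by intro h; rw [h] at hs; norm_num at hs
  rw [deg2F, Submodule.mem_span_pair] at hz₁ hz₂
  obtain ⟨a₁, b₁, rfl⟩ := hz₁
  obtain ⟨a₂, b₂, rfl⟩ := hz₂
  rw [lin_eq] at hz₁0 hz₂0 hmul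
  rw [lin_eq, ← map_mul] at hmul
  have hne₁ : ¬(a₁ = 0 ∧ b₁ = 0) := by
    rintro ⟨rfl, rfl⟩; simp at hz₁0
  have hne₂ : ¬(a₂ = 0 ∧ b₂ = 0) := by
    rintro ⟨rfl, rfl⟩; simp at hz₂0
  obtain ⟨h1, h2⟩ := prod_rel (Ideal.Quotient.eq_zero_iff_mem.mp hmul)
  have ha₁ : a₁ ≠ 0 := by
    rintro rfl
    have hb₁ : b₁ ≠ 0 := fun hb => hne₁ ⟨rfl, hb⟩
    have ha₂ : a₂ = 0 := by
      have : a₂ * b₁ = 0 := by linear_combination -h1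
      rcases mul_eq_zero.mp this with h | h
      · exact h
      · exact absurd h hb₁
    apply hne₂
    refine ⟨ha₂, ?_⟩
    have : b₁ * b₂ = 0 := by rw [h2, ha₂]; ring
    rcases mul_eq_zero.mp this with h | h
    · exact absurd h hb₁
    · exact h
  have ha₂ : a₂ ≠ 0 := by
    rintro rfl
    apply hne₂
    refine ⟨rfl, ?_⟩
    have : a₁ * b₂ = 0 := by linear_combination -h1
    rcases mul_eq_zero.mp this with h | h
    · exact absurd h ha₁
    · exact h
  -- quadratic relations
  have q₁ : b₁ ^ 2 - a₁ * b₁ + a₁ ^ 2 = 0 := by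
    have T : a₂ * (b₁ ^ 2 - a₁ * b₁ + a₁ ^ 2) = 0 := by
      linear_combination (a₁ - b₁) * h1 - a₁ * h2
    rcases mul_eq_zero.mp T with h | h
    · exact absurd h ha₂
    · exact h
  have q₂ : b₂ ^ 2 - a₂ * b₂ + a₂ ^ 2 = 0 := by
    have T : a₁ * (b₂ ^ 2 - a₂ * b₂ + a₂ ^ 2) = 0 := by
      linear_combination (a₂ - b₂) * h1 - a₂ * h2
    rcases mul_eq_zero.mp T with h | h
    · exact absurd h ha₁
    · exact h
  have f₁ : (2 * b₁ - a₁ * (1 + s)) * (2 * b₁ - a₁ * (1 - s)) = 0 := by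
    linear_combination 4 * q₁ - a₁ ^ 2 * hs
  have f₂ : (2 * b₂ - a₂ * (1 + s)) * (2 * b₂ - a₂ * (1 - s)) = 0 := by
    linear_combination 4 * q₂ - a₂ ^ 2 * hs
  have zeq : ∀ (a b μ : ℂ), b = μ * a →
      a • x₁ + b • x₂ = a • (x₁ + μ • x₂) := by
    intro a b μ hb
    rw [smul_add, smul_smul, hb, mul_comm]
  refine ⟨a₁, a₂, ha₁, ha₂, ?_⟩
  rcases mul_eq_zero.mp f₁ with g₁ | g₁ <;> rcases mul_eq_zero.mp f₂ with g₂ | g₂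
  · -- b₁ = μ₊ a₁, b₂ = μ₊ a₂ : contradiction
    exfalso
    apply hs0
    have : a₁ * a₂ * s = 0 := by linear_combination -(a₂ * g₁ + a₁ * g₂) / 2 - h1
    rcases mul_eq_zero.mp this with h | h
    · rcases mul_eq_zero.mp h with h' | h'
      · exact absurd h' ha₁
      · exact absurd h' ha₂
    · exact h
  · left
    exact ⟨zeq _ _ _ (by linear_combination g₁ / 2), zeq _ _ _ (by linear_combination g₂ / 2)⟩
  · right
    exact ⟨zeq _ _ _ (by linear_combination g₁ / 2), zeq _ _ _ (by linear_combination g₂ / 2)⟩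
  · exfalso
    apply hs0
    have : a₁ * a₂ * s = 0 := by linear_combination (a₂ * g₁ + a₁ * g₂) / 2 + h1
    rcases mul_eq_zero.mp this with h | h
    · rcases mul_eq_zero.mp h with h' | h'
      · exact absurd h' ha₁
      · exact absurd h' ha₂
    · exact h
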